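/- Let σ₀, σ > 0, n a nonnegative integer, and set σ̂² = 1/(σ₀⁻² + σ⁻²·n) (the posterior variance of a leaf with n observations). Then the precision increase from one new observation satisfies 1/(σ₀² + σ²/(n+1)) − 1/(σ₀² + σ²/n) ≥ (1/c)·(σ̂⁴/σ₀⁴)·σ⁻², where c = 1 + σ₀²/σ². -/
import Mathlib


theorem leaf_node_precision_lower_bound (σ₀ σ : ℝ) (hσ₀ : 0 < σ₀) (hσ : 0 < σ) (n : ℕ) :
    (1 / (1 + σ₀ ^ 2 / σ ^ 2)) *
        ((1 / ((σ₀ ^ 2)⁻¹ + (σ ^ 2)⁻¹ * n)) ^ 2 / σ₀ ^ 4) * (σ ^ 2)⁻¹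
      ≤ 1 / (σ₀ ^ 2 + σ ^ 2 / (n + 1)) -
          (if n = 0 then 0 else 1 / (σ₀ ^ 2 + σ ^ 2 / n)) := by
  have ha : (0:ℝ) < σ₀ ^ 2 := by positivity
  have hb : (0:ℝ) < σ ^ 2 := by positivity
  rcases eq_or_ne n 0 with h | h
  · subst h
    simp only [if_pos, Nat.cast_zero, sub_zero, mul_zero, add_zero, Nat.cast_ofNat,
      zero_add, if_true]
    apply le_of_eq
    field_simp
    ring
  · rw [if_neg h]
    have hn : (1:ℝ) ≤ (n:ℝ) := by exact_mod_cast Nat.one_le_iff_ne_zero.mpr h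
    have hn0 : (0:ℝ) < (n:ℝ) := by linarith
    have hx : (0:ℝ) < σ₀ ^ 2 * n + σ ^ 2 := by positivity
    have hy : (0:ℝ) < σ₀ ^ 2 * n + σ₀ ^ 2 + σ ^ 2 := by positivity
    have hL : (1 / (1 + σ₀ ^ 2 / σ ^ 2)) *
          ((1 / ((σ₀ ^ 2)⁻¹ + (σ ^ 2)⁻¹ * n)) ^ 2 / σ₀ ^ 4) * (σ ^ 2)⁻¹
        = (σ ^ 2) ^ 2 / ((σ ^ 2 + σ₀ ^ 2) * (σ₀ ^ 2 * n + σ ^ 2) ^ 2) := by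
      field_simp
      ring
    have hR : 1 / (σ₀ ^ 2 + σ ^ 2 / (n + 1)) - 1 / (σ₀ ^ 2 + σ ^ 2 / n)
        = σ ^ 2 / ((σ₀ ^ 2 * n + σ₀ ^ 2 + σ ^ 2) * (σ₀ ^ 2 * n + σ ^ 2)) := by
      rw [div_sub_div _ _ (by positivity) (by positivity),
        div_eq_div_iff (by positivity) (by positivity)]
      field_simp
      ring
    rw [hL, hR, div_le_div_iff₀ (by positivity) (by positivity)]
    nlinarith [mul_nonneg (mul_nonneg hb.le hx.le) (by positivity : (0:ℝ) ≤ σ₀ ^ 4 * n)]
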